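/- Let G be a transitive nilpotent permutation group on a finite set Ω, p a prime dividing |G|, α ∈ Ω, and let Σ_p = α^{G_p} be the orbit of α under the p-Sylow subgroup G_p. If Δ is any G-block containing α with |Δ| = p^l for some l ≥ 0, then Δ ⊆ Σ_p. -/
import Mathlib


open Pointwise

namespace GaloisBlocks

variable {Ω : Type*}

/-- `G ≤ Sym(Ω)` is transitive on `Ω`. -/
def IsTransitive (G : Subgroup (Equiv.Perm Ω)) : Prop :=
  ∀ a b : Ω, ∃ g ∈ G, g a = b

/-- `Δ` is a `G`-block: every `G`-translate of `Δ` equals `Δ` or is disjoint from it. -/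
def IsBlock (G : Subgroup (Equiv.Perm Ω)) (Δ : Set Ω) : Prop :=
  ∀ g ∈ G, g • Δ = Δ ∨ Disjoint (g • Δ) Δ

/-- The setwise stabilizer `G_Δ` of `Δ` in `G`. -/
def stab (G : Subgroup (Equiv.Perm Ω)) (Δ : Set Ω) : Subgroup (Equiv.Perm Ω) :=
  G ⊓ MulAction.stabilizer (Equiv.Perm Ω) Δ

/-- The point stabilizer `G_α`. -/
def stabPt (G : Subgroup (Equiv.Perm Ω)) (α : Ω) : Subgroup (Equiv.Perm Ω) :=
  G ⊓ MulAction.stabilizer (Equiv.Perm Ω) α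

/-- The `Δ`-block system of `S`: all `G`-translates of `Δ` contained in `S`. -/
def blockSystem (G : Subgroup (Equiv.Perm Ω)) (S Δ : Set Ω) : Set (Set Ω) :=
  {Υ | (∃ g ∈ G, Υ = g • Δ) ∧ Υ ⊆ S}

/-- `G(S/Δ)`: elements of `G_S` fixing setwise every block of the `Δ`-block
system of `S`. -/
def blockKer (G : Subgroup (Equiv.Perm Ω)) (S Δ : Set Ω) : Subgroup (Equiv.Perm Ω) :=
  stab G S ⊓ ⨅ Υ ∈ blockSystem G S Δ, MulAction.stabilizer (Equiv.Perm Ω) Υ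

/-- `G^Δ = G(Ω/Δ)`: the kernel of the action of `G` on the block system of `Δ`. -/
def fullKer (G : Subgroup (Equiv.Perm Ω)) (Δ : Set Ω) : Subgroup (Equiv.Perm Ω) :=
  blockKer G Set.univ Δ

/-- The orbit `α^N`. -/
def orbitOf (N : Subgroup (Equiv.Perm Ω)) (α : Ω) : Set Ω :=
  {β | ∃ g ∈ N, g α = β}

/-- `G` is primitive: transitive with only trivial blocks. -/
def IsPrimitive (G : Subgroup (Equiv.Perm Ω)) : Prop :=
  IsTransitive G ∧ ∀ Δ : Set Ω, IsBlock G Δ → Δ.Subsingleton ∨ Δ = Set.univ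

/-- `Δ` is a maximal `G`-subblock of `S`. -/
def IsMaximalSubblock (G : Subgroup (Equiv.Perm Ω)) (Δ S : Set Ω) : Prop :=
  IsBlock G Δ ∧ IsBlock G S ∧ Δ ⊂ S ∧
    ∀ Υ : Set Ω, IsBlock G Υ → ¬(Δ ⊂ Υ ∧ Υ ⊂ S)

/-- `P` is a `p`-Sylow subgroup of `G`. -/
def IsSylowOf (p : ℕ) (P G : Subgroup (Equiv.Perm Ω)) : Prop :=
  P ≤ G ∧ IsPGroup p ↥P ∧
    ∀ Q : Subgroup (Equiv.Perm Ω), Q ≤ G → IsPGroup p ↥Q → P ≤ Q → Q = P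

/-- Any block containing `α` of `p`-power size is contained in `Σ_p = α^{G_p}`. -/
theorem stmt6 [Fintype Ω] (G P : Subgroup (Equiv.Perm Ω)) (hG : IsTransitive G)
    (hnil : Group.IsNilpotent ↥G) (p : ℕ) (hp : p.Prime)
    (hpG : p ∣ Nat.card ↥G) (hP : IsSylowOf p P G) (α : Ω)
    (Δ : Set Ω) (hΔ : IsBlock G Δ) (hα : α ∈ Δ) (l : ℕ)
    (hcard : Δ.ncard = p ^ l) :
    Δ ⊆ orbitOf P α := by
  classical
  haveI := hnil
  haveI : Fact p.Prime := ⟨hp⟩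
  set H : Subgroup (Equiv.Perm Ω) := stab G Δ with hHdef
  have hHG : H ≤ G := inf_le_left
  -- the setwise stabilizer of a block is transitive on the block
  have htrans : ∀ β ∈ Δ, ∃ h : Equiv.Perm Ω, h ∈ H ∧ h α = β := by
    intro β hβ
    obtain ⟨g, hg, hgαβ⟩ := hG α β
    refine ⟨g, ?_, hgαβ⟩
    rcases hΔ g hg with h1 | h2
    · exact Subgroup.mem_inf.mpr ⟨hg, h1⟩
    · exfalso
      have hmem : β ∈ g • Δ := ⟨α, hα, hgαβ⟩
      exact Set.disjoint_left.mp h2 hmem hβ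
  -- the H-orbit of α is Δ
  have horb : MulAction.orbit ↥H α = Δ := by
    ext β
    constructor
    · rintro ⟨h, rfl⟩
      have hmem : (h : Equiv.Perm Ω) ∈ MulAction.stabilizer (Equiv.Perm Ω) Δ :=
        (Subgroup.mem_inf.mp h.2).2
      have hst : (h : Equiv.Perm Ω) • Δ = Δ := hmem
      have : (h : Equiv.Perm Ω) • α ∈ (h : Equiv.Perm Ω) • Δ := Set.smul_mem_smul_set hα
      rwa [hst] at this
    · intro hβ
      obtain ⟨h, hh, hhα⟩ := htrans β hβ
      exact ⟨⟨h, hh⟩, hhα⟩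
  have hidx : (MulAction.stabilizer ↥H α).index = p ^ l := by
    rw [MulAction.index_stabilizer, horb, hcard]
  -- H is nilpotent
  haveI : Group.IsNilpotent ↥(H.subgroupOf G) := Subgroup.isNilpotent _
  haveI : Group.IsNilpotent ↥H :=
    nilpotent_of_surjective (Subgroup.subgroupOfEquivOfLe hHG).toMonoidHom
      (MulEquiv.surjective _)
  obtain ⟨S⟩ : Nonempty (Sylow p ↥H) := inferInstance
  have h14H := (isNilpotent_of_finite_tfae (G := ↥H)).out 0 3
  haveI hSnormal : (S : Subgroup ↥H).Normal := h14H.mp ‹Group.IsNilpotent ↥H› p ⟨hp⟩ S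
  set K := MulAction.stabilizer ↥H α with hKdef
  have hsup : (S : Subgroup ↥H) ⊔ K = ⊤ := by
    have h1 : ((S : Subgroup ↥H) ⊔ K).index ∣ p ^ l :=
      hidx ▸ Subgroup.index_dvd_of_le le_sup_right
    have h2 : ¬ p ∣ ((S : Subgroup ↥H) ⊔ K).index := fun hd =>
      S.not_dvd_index (hd.trans (Subgroup.index_dvd_of_le le_sup_left))
    have hcop : Nat.Coprime (((S : Subgroup ↥H) ⊔ K).index) p :=
      ((Nat.Prime.coprime_iff_not_dvd hp).mpr h2).symm
    exact Subgroup.index_eq_one.mp ((hcop.pow_right l).eq_one_of_dvd h1)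
  -- the image of S in Perm Ω is contained in P
  set S' : Subgroup (Equiv.Perm Ω) := (S : Subgroup ↥H).map H.subtype with hS'def
  have hS'G : S' ≤ G := le_trans (Subgroup.map_subtype_le _) hHG
  have hS'p : IsPGroup p ↥S' := S.2.map H.subtype
  have hPsub : IsPGroup p ↥(P.subgroupOf G) :=
    hP.2.1.of_equiv (Subgroup.subgroupOfEquivOfLe hP.1).symm
  obtain ⟨T, hPT⟩ := hPsub.exists_le_sylow
  have h14G := (isNilpotent_of_finite_tfae (G := ↥G)).out 0 3
  haveI hTnormal : (T : Subgroup ↥G).Normal := h14G.mp hnil p ⟨hp⟩ T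
  have hS'sub : IsPGroup p ↥(S'.subgroupOf G) :=
    hS'p.of_equiv (Subgroup.subgroupOfEquivOfLe hS'G).symm
  have hST : S'.subgroupOf G ≤ (T : Subgroup ↥G) := by
    have hpg : IsPGroup p ↥(S'.subgroupOf G ⊔ (T : Subgroup ↥G)) :=
      hS'sub.to_sup_of_normal_right T.2
    have heq := T.3 hpg le_sup_right
    exact le_sup_left.trans heq.le
  have hmapeq : ∀ (Q : Subgroup (Equiv.Perm Ω)), Q ≤ G →
      (Q.subgroupOf G).map G.subtype = Q := by
    intro Q hQ
    rw [Subgroup.subgroupOf_map_subtype, inf_of_le_left hQ]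
  have hT'eq : ((T : Subgroup ↥G)).map G.subtype = P := by
    apply hP.2.2
    · exact Subgroup.map_subtype_le _
    · exact T.2.map G.subtype
    · have := Subgroup.map_mono (f := G.subtype) hPT
      rwa [hmapeq P hP.1] at this
  have hS'P : S' ≤ P := by
    have := Subgroup.map_mono (f := G.subtype) hST
    rwa [hmapeq S' hS'G, hT'eq] at this
  -- finish
  intro β hβ
  obtain ⟨h, hh, hhα⟩ := htrans β hβ
  have hmemtop : (⟨h, hh⟩ : ↥H) ∈ ((S : Subgroup ↥H) ⊔ K : Subgroup ↥H) := by
    rw [hsup]; exact Subgroup.mem_top _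
  have hmemmul : (⟨h, hh⟩ : ↥H) ∈ ((S : Subgroup ↥H) : Set ↥H) * (K : Set ↥H) := by
    rwa [← Subgroup.normal_mul (S : Subgroup ↥H) K, SetLike.mem_coe]
  obtain ⟨s, hs, k, hk, hsk⟩ := hmemmul
  have hsk' : s * k = (⟨h, hh⟩ : ↥H) := hsk
  refine ⟨(s : Equiv.Perm Ω), hS'P ⟨s, hs, rfl⟩, ?_⟩
  have hkα : (k : Equiv.Perm Ω) α = α := hk
  have hfin : ((s * k : ↥H) : Equiv.Perm Ω) α = β := by
    rw [hsk']
    exact hhα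
  rw [Subgroup.coe_mul, Equiv.Perm.mul_apply, hkα] at hfin
  exact hfin

end GaloisBlocks
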